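/- Let Σ⁻¹ be a symmetric positive-definite n×n matrix and G a finite group of permutation matrices. Suppose that for all R_1 ≠ R_2 in G, Σ⁻¹ does not commute with R_2 R_1^T. Then for almost every x ∈ R^n (with respect to Lebesgue measure), the values ‖R x‖²_{Σ⁻¹} for R ∈ G are pairwise distinct; in particular the minimizer of y ↦ y^T Σ⁻¹ y over the orbit {R x : R ∈ G} is unique. -/

import Mathlib

open Matrix MeasureTheory
open scoped ENNReal

private lemma quad_expand {n : ℕ} (A : Matrix (Fin n) (Fin n) ℝ) (x v : Fin n → ℝ) (t : ℝ) :
    (x + t • v) ⬝ᵥ A *ᵥ (x + t • v)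
      = x ⬝ᵥ A *ᵥ x + t * (x ⬝ᵥ A *ᵥ v + v ⬝ᵥ A *ᵥ x) + t ^ 2 * (v ⬝ᵥ A *ᵥ v) := by
  simp only [Matrix.mulVec_add, Matrix.mulVec_smul, add_dotProduct, dotProduct_add,
    smul_dotProduct, dotProduct_smul, smul_eq_mul]
  ring

private lemma quad_cont {n : ℕ} (A : Matrix (Fin n) (Fin n) ℝ) :
    Continuous fun x : Fin n → ℝ => x ⬝ᵥ A *ᵥ x := by
  simp only [dotProduct, Matrix.mulVec]
  fun_prop

/-- The zero set of a quadratic form that is somewhere nonzero is Lebesgue-null. -/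
private lemma quad_null {n : ℕ} (A : Matrix (Fin n) (Fin n) ℝ) (v : Fin n → ℝ)
    (hv : v ⬝ᵥ A *ᵥ v ≠ 0) :
    (volume : Measure (Fin n → ℝ)) {x | x ⬝ᵥ A *ᵥ x = 0} = 0 := by
  set Z : Set (Fin n → ℝ) := {x | x ⬝ᵥ A *ᵥ x = 0} with hZdef
  have hZ : MeasurableSet Z := (quad_cont A).measurable (measurableSet_singleton (0:ℝ))
  have hslice : ∀ x : Fin n → ℝ, (volume : Measure ℝ) {t : ℝ | x + t • v ∈ Z} = 0 := by
    intro x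
    have hfin : {t : ℝ | x + t • v ∈ Z}.Finite := by
      set a := v ⬝ᵥ A *ᵥ v with ha
      set b := x ⬝ᵥ A *ᵥ v + v ⬝ᵥ A *ᵥ x with hb
      set c := x ⬝ᵥ A *ᵥ x with hc
      have hp : (Polynomial.C a * Polynomial.X ^ 2 + Polynomial.C b * Polynomial.X
          + Polynomial.C c : Polynomial ℝ) ≠ 0 := by
        intro h
        have h2 := congrArg (fun p : Polynomial ℝ => p.coeff 2) h
        simp [Polynomial.coeff_C] at h2
        exact hv h2
      refine (Polynomial.finite_setOf_isRoot hp).subset ?_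
      intro t ht
      simp only [Set.mem_setOf_eq, hZdef, quad_expand] at ht
      simp only [Set.mem_setOf_eq, Polynomial.IsRoot, Polynomial.eval_add,
        Polynomial.eval_mul, Polynomial.eval_pow, Polynomial.eval_C, Polynomial.eval_X]
      linear_combination ht
    exact hfin.measure_zero _
  set ν : Measure ℝ := volume.restrict (Set.Icc (0:ℝ) 1) with hν
  have hmeas : Measurable (Function.uncurry fun (t : ℝ) (x : Fin n → ℝ) =>
      Z.indicator (fun _ => (1 : ℝ≥0∞)) (x + t • v)) := by
    apply (measurable_one.indicator hZ).comp
    apply Measurable.add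
    · exact measurable_snd
    · exact measurable_fst.smul measurable_const
  have swap := lintegral_lintegral_swap (μ := ν) (ν := (volume : Measure (Fin n → ℝ)))
    hmeas.aemeasurable
  have hL : ∫⁻ t, ∫⁻ x, Z.indicator (fun _ => (1 : ℝ≥0∞)) (x + t • v)
        ∂(volume : Measure (Fin n → ℝ)) ∂ν
      = (volume : Measure (Fin n → ℝ)) Z := by
    have inner : ∀ t : ℝ, ∫⁻ x, Z.indicator (fun _ => (1 : ℝ≥0∞)) (x + t • v)
        ∂(volume : Measure (Fin n → ℝ)) = (volume : Measure (Fin n → ℝ)) Z := by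
      intro t
      rw [lintegral_add_right_eq_self (fun x => Z.indicator (fun _ => (1 : ℝ≥0∞)) x) (t • v)]
      simp [lintegral_indicator, hZ]
    simp only [inner]
    simp [hν, Real.volume_Icc]
  have hR : ∫⁻ x, ∫⁻ t, Z.indicator (fun _ => (1 : ℝ≥0∞)) (x + t • v) ∂ν
      ∂(volume : Measure (Fin n → ℝ)) = 0 := by
    have inner0 : ∀ x : Fin n → ℝ,
        ∫⁻ t, Z.indicator (fun _ => (1 : ℝ≥0∞)) (x + t • v) ∂ν = 0 := by
      intro x
      have h0 : ν {t : ℝ | x + t • v ∈ Z} = 0 :=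
        le_antisymm ((Measure.restrict_le_self _).trans_eq (hslice x)) zero_le
      have hae : ∀ᵐ t ∂ν, Z.indicator (fun _ => (1 : ℝ≥0∞)) (x + t • v) = 0 := by
        filter_upwards [(measure_eq_zero_iff_ae_notMem.1 h0 : _)] with t ht
        exact Set.indicator_of_notMem ht _
      rw [lintegral_congr_ae hae, lintegral_zero]
    simp only [inner0, lintegral_zero]
  rw [← hL, swap, hR]

private lemma perm_orth {n : ℕ} (σ : Equiv.Perm (Fin n)) :
    σ.permMatrix ℝ * (σ.permMatrix ℝ)ᵀ = 1 := by
  rw [← PEquiv.toMatrix_symm, ← PEquiv.toMatrix_trans, ← Equiv.toPEquiv_symm,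
    ← Equiv.toPEquiv_trans]
  simp

private lemma commute_of_quad_eq {n : ℕ} (S P₁ P₂ : Matrix (Fin n) (Fin n) ℝ)
    (h₁ : P₁ * P₁ᵀ = 1) (h₂ : P₂ * P₂ᵀ = 1) (h : P₁ᵀ * S * P₁ = P₂ᵀ * S * P₂) :
    S * (P₂ * P₁ᵀ) = (P₂ * P₁ᵀ) * S := by
  have h2 : P₂ * (P₁ᵀ * S * P₁) * P₁ᵀ = P₂ * (P₂ᵀ * S * P₂) * P₁ᵀ := by rw [h]
  simp only [Matrix.mul_assoc] at h2
  rw [h₁, Matrix.mul_one] at h2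
  rw [← Matrix.mul_assoc P₂ P₂ᵀ, h₂, Matrix.one_mul] at h2
  rw [← h2, Matrix.mul_assoc]

private lemma quad_conj {n : ℕ} (M S : Matrix (Fin n) (Fin n) ℝ) (x : Fin n → ℝ) :
    (M *ᵥ x) ⬝ᵥ S *ᵥ (M *ᵥ x) = x ⬝ᵥ (Mᵀ * S * M) *ᵥ x := by
  conv_rhs => rw [Matrix.dotProduct_mulVec, ← Matrix.vecMul_vecMul, ← Matrix.vecMul_vecMul,
    Matrix.vecMul_transpose, ← Matrix.dotProduct_mulVec, ← Matrix.dotProduct_mulVec]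

/-- A symmetric matrix whose quadratic form vanishes identically is zero. -/
private lemma eq_zero_of_quad {n : ℕ} (A : Matrix (Fin n) (Fin n) ℝ) (hsym : Aᵀ = A)
    (h : ∀ v : Fin n → ℝ, v ⬝ᵥ A *ᵥ v = 0) : A = 0 := by
  have hbil : ∀ u w : Fin n → ℝ, u ⬝ᵥ A *ᵥ w = 0 := by
    intro u w
    have h1 := h (u + w)
    have hswap : w ⬝ᵥ A *ᵥ u = u ⬝ᵥ A *ᵥ w := by
      rw [Matrix.dotProduct_mulVec, ← Matrix.vecMul_transpose, hsym]
      exact dotProduct_comm _ _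
    simp only [add_dotProduct, dotProduct_add, Matrix.mulVec_add, h u, h w] at h1
    rw [hswap] at h1
    linarith [h1, h u, h w]
  have hmv : ∀ w : Fin n → ℝ, A *ᵥ w = 0 := by
    intro w
    exact dotProduct_self_eq_zero.1 (hbil (A *ᵥ w) w)
  ext i j
  have := congrFun (hmv (Pi.single j 1)) i
  simpa [Matrix.mulVec_single] using this

/-- If `Σ⁻¹` does not commute with `R₂R₁ᵀ` for any two distinct elements of a
group `G` of permutation matrices, then for almost every `x` the values
`‖Rx‖²_{Σ⁻¹}`, `R ∈ G`, are pairwise distinct; in particular the minimizer of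
the quadratic form over the orbit of `x` is unique. -/
theorem ae_unique_minimizer_over_orbit (n : ℕ) (S : Matrix (Fin n) (Fin n) ℝ)
    (hS : S.PosDef) (G : Subgroup (Equiv.Perm (Fin n)))
    (hnc : ∀ σ₁ ∈ G, ∀ σ₂ ∈ G, σ₁ ≠ σ₂ →
      ¬ (S * (σ₂.permMatrix ℝ * (σ₁.permMatrix ℝ)ᵀ)
          = (σ₂.permMatrix ℝ * (σ₁.permMatrix ℝ)ᵀ) * S)) :
    ∀ᵐ x ∂(volume : Measure (Fin n → ℝ)),
      (∀ σ₁ ∈ G, ∀ σ₂ ∈ G, σ₁ ≠ σ₂ →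
        (σ₁.permMatrix ℝ *ᵥ x) ⬝ᵥ S *ᵥ (σ₁.permMatrix ℝ *ᵥ x)
          ≠ (σ₂.permMatrix ℝ *ᵥ x) ⬝ᵥ S *ᵥ (σ₂.permMatrix ℝ *ᵥ x))
      ∧ ∃! y : Fin n → ℝ,
          (∃ σ ∈ G, y = σ.permMatrix ℝ *ᵥ x)
          ∧ ∀ z : Fin n → ℝ, (∃ σ ∈ G, z = σ.permMatrix ℝ *ᵥ x) →
              y ⬝ᵥ S *ᵥ y ≤ z ⬝ᵥ S *ᵥ z := by
  classical
  have hSsym : Sᵀ = S := by have h : S.IsSymm := by simpa using hS.isHermitian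
                            exact h
  have key : ∀ᵐ x ∂(volume : Measure (Fin n → ℝ)),
      ∀ σ₁ ∈ G, ∀ σ₂ ∈ G, σ₁ ≠ σ₂ →
        (σ₁.permMatrix ℝ *ᵥ x) ⬝ᵥ S *ᵥ (σ₁.permMatrix ℝ *ᵥ x)
          ≠ (σ₂.permMatrix ℝ *ᵥ x) ⬝ᵥ S *ᵥ (σ₂.permMatrix ℝ *ᵥ x) := by
    refine ae_all_iff.2 fun σ₁ => ae_all_iff.2 fun hσ₁ => ae_all_iff.2 fun σ₂ =>
      ae_all_iff.2 fun hσ₂ => ae_all_iff.2 fun hne => ?_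
    have hAsym : ((σ₁.permMatrix ℝ)ᵀ * S * σ₁.permMatrix ℝ
        - (σ₂.permMatrix ℝ)ᵀ * S * σ₂.permMatrix ℝ)ᵀ
        = (σ₁.permMatrix ℝ)ᵀ * S * σ₁.permMatrix ℝ
          - (σ₂.permMatrix ℝ)ᵀ * S * σ₂.permMatrix ℝ := by
      simp [Matrix.transpose_sub, Matrix.transpose_mul, hSsym, Matrix.mul_assoc]
    obtain ⟨v, hv⟩ : ∃ v : Fin n → ℝ,
        v ⬝ᵥ ((σ₁.permMatrix ℝ)ᵀ * S * σ₁.permMatrix ℝ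
          - (σ₂.permMatrix ℝ)ᵀ * S * σ₂.permMatrix ℝ) *ᵥ v ≠ 0 := by
      by_contra hall
      push_neg at hall
      have hA0 := eq_zero_of_quad _ hAsym hall
      have h := sub_eq_zero.1 hA0
      exact hnc σ₁ hσ₁ σ₂ hσ₂ hne
        (commute_of_quad_eq S _ _ (perm_orth σ₁) (perm_orth σ₂) h)
    have hnull := quad_null _ v hv
    rw [ae_iff]
    have hset : {x : Fin n → ℝ |
        ¬ ((σ₁.permMatrix ℝ *ᵥ x) ⬝ᵥ S *ᵥ (σ₁.permMatrix ℝ *ᵥ x)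
          ≠ (σ₂.permMatrix ℝ *ᵥ x) ⬝ᵥ S *ᵥ (σ₂.permMatrix ℝ *ᵥ x))}
        = {x : Fin n → ℝ | x ⬝ᵥ ((σ₁.permMatrix ℝ)ᵀ * S * σ₁.permMatrix ℝ
          - (σ₂.permMatrix ℝ)ᵀ * S * σ₂.permMatrix ℝ) *ᵥ x = 0} := by
      ext x
      simp only [Set.mem_setOf_eq, not_not, Matrix.sub_mulVec, dotProduct_sub,
        ← quad_conj, sub_eq_zero]
    rw [hset]
    exact hnull
  filter_upwards [key] with x hx
  refine ⟨hx, ?_⟩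
  obtain ⟨y, hyO, hymin⟩ := Set.exists_min_image
    ((fun σ : Equiv.Perm (Fin n) => σ.permMatrix ℝ *ᵥ x) '' (G : Set (Equiv.Perm (Fin n))))
    (fun y => y ⬝ᵥ S *ᵥ y) ((Set.toFinite _).image _)
    ⟨_, ⟨1, G.one_mem, rfl⟩⟩
  obtain ⟨σ, hσG, hyeq⟩ := hyO
  refine ⟨y, ⟨⟨σ, hσG, hyeq.symm⟩, ?_⟩, ?_⟩
  · rintro z ⟨τ, hτG, hzeq⟩
    exact hymin z ⟨τ, hτG, hzeq.symm⟩
  · rintro y' ⟨⟨σ', hσ'G, hy'eq⟩, hmin'⟩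
    rcases eq_or_ne σ' σ with h | h
    · rw [hy'eq, h, ← hyeq]
    · exfalso
      apply hx σ' hσ'G σ hσG h
      have h1 : y' ⬝ᵥ S *ᵥ y' ≤ y ⬝ᵥ S *ᵥ y := hmin' y ⟨σ, hσG, hyeq.symm⟩
      have h2 : y ⬝ᵥ S *ᵥ y ≤ y' ⬝ᵥ S *ᵥ y' := hymin y' ⟨σ', hσ'G, hy'eq.symm⟩
      have heq := le_antisymm h1 h2
      rw [hy'eq, ← hyeq] at heq
      exact heq
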